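/- Let r_1, r_2, r_3, r_4 ∈ ℝ² (with r_i = (x_i, y_i)) satisfy det[r_2 − r_1, r_4 − r_1] > 0 and det[r_3 − r_2, r_4 − r_2] > 0, and define T_1 = conv(r_1, r_2, r_4), T_2 = conv(r_2, r_3, r_4) and β_i = 4 λ^{(i)}_2 λ^{(i)}_4 as the edge-bubble of the shared edge r_2 r_4 on T_i (λ^{(i)}_2, λ^{(i)}_4 being the barycentric coordinates of T_i at r_2 and r_4). Let w : ℝ² → ℝ. If both vertex-quadrature sums vanish, i.e., Σ_{i=1}^{2} (|T_i|/3) Σ_{v ∈ vertices(T_i)} ∂_1β_i(v) w(v) = 0 and Σ_{i=1}^{2} (|T_i|/3) Σ_{v ∈ vertices(T_i)} ∂_2β_i(v) w(v) = 0, then w(r_2) = w(r_4). (Note that the two orientation hypotheses force r_1 ≠ r_3, so x_1 − x_3 and y_1 − y_3 cannot both be zero.) -/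

import Mathlib

open MeasureTheory Pointwise

lemma fderiv_quad (a b c a' b' c' : ℝ) (p v : ℝ × ℝ) :
    fderiv ℝ (fun q : ℝ × ℝ => 4 * (a * q.1 + b * q.2 + c) * (a' * q.1 + b' * q.2 + c')) p v
      = 4 * ((a * v.1 + b * v.2) * (a' * p.1 + b' * p.2 + c')
           + (a * p.1 + b * p.2 + c) * (a' * v.1 + b' * v.2)) := by
  have h1 : HasFDerivAt (fun q : ℝ × ℝ => 4 * (a * q.1 + b * q.2 + c))
      ((4 : ℝ) • (a • ContinuousLinearMap.fst ℝ ℝ ℝ + b • ContinuousLinearMap.snd ℝ ℝ ℝ)) p := by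
    have := (((hasFDerivAt_fst (𝕜 := ℝ) (p := p)).const_mul a).add
      ((hasFDerivAt_snd (𝕜 := ℝ) (p := p)).const_mul b)).add_const c
    exact this.const_mul 4
  have h2 : HasFDerivAt (fun q : ℝ × ℝ => a' * q.1 + b' * q.2 + c')
      (a' • ContinuousLinearMap.fst ℝ ℝ ℝ + b' • ContinuousLinearMap.snd ℝ ℝ ℝ) p := by
    exact (((hasFDerivAt_fst (𝕜 := ℝ) (p := p)).const_mul a').add
      ((hasFDerivAt_snd (𝕜 := ℝ) (p := p)).const_mul b')).add_const c'
  have h : HasFDerivAt (fun q : ℝ × ℝ => 4 * (a * q.1 + b * q.2 + c) * (a' * q.1 + b' * q.2 + c')) _ p := h1.mul h2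
  rw [h.fderiv]
  simp [ContinuousLinearMap.add_apply, ContinuousLinearMap.smul_apply]
  ring


noncomputable def lin2 (a b c d : ℝ) : (ℝ×ℝ) →ₗ[ℝ] (ℝ×ℝ) :=
  Matrix.toLin (Module.Basis.finTwoProd ℝ) (Module.Basis.finTwoProd ℝ) !![a, b; c, d]

lemma lin2_apply (a b c d : ℝ) (p : ℝ×ℝ) : lin2 a b c d p = (a*p.1+b*p.2, c*p.1+d*p.2) := by
  simp [lin2, Matrix.toLin_apply, Matrix.mulVec, dotProduct, Fin.sum_univ_two,
    Module.Basis.finTwoProd_zero, Module.Basis.finTwoProd_one, Prod.ext_iff]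

lemma lin2_det (a b c d : ℝ) : LinearMap.det (lin2 a b c d) = a*d - b*c := by
  rw [lin2, LinearMap.det_toLin]
  simp [Matrix.det_fin_two_of]

lemma line_null : volume {p : ℝ×ℝ | p.1 + p.2 = 1} = 0 := by
  have himg : {p : ℝ×ℝ | p.1 + p.2 = 1} = (lin2 1 0 (-1) 1) '' ((Set.univ : Set ℝ) ×ˢ {(1:ℝ)}) := by
    ext p
    simp only [Set.mem_setOf_eq, Set.mem_image, Set.mem_prod, Set.mem_univ, Set.mem_singleton_iff]
    constructor
    · intro h
      refine ⟨(p.1, 1), ⟨trivial, rfl⟩, ?_⟩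
      rw [lin2_apply, Prod.ext_iff]
      constructor <;> simp <;> linarith
    · rintro ⟨q, ⟨-, hq⟩, rfl⟩
      rw [lin2_apply]
      simp only [Set.mem_setOf_eq]
      rw [hq]; ring
  rw [himg, Measure.addHaar_image_linearMap, lin2_det]
  rw [Measure.volume_eq_prod, Measure.prod_prod]
  simp

lemma T0_eq : {p : ℝ×ℝ | 0 ≤ p.1 ∧ 0 ≤ p.2 ∧ p.1 + p.2 ≤ 1}
    = convexHull ℝ {((0:ℝ),(0:ℝ)), (1,0), (0,1)} := by
  apply Set.Subset.antisymm
  · intro p hp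
    obtain ⟨hx, hy, hxy⟩ := hp
    have := Finset.centerMass_mem_convexHull (R := ℝ) (E := ℝ×ℝ)
      (s := {((0:ℝ),(0:ℝ)), (1,0), (0,1)}) (Finset.univ : Finset (Fin 3))
      (w := ![1 - p.1 - p.2, p.1, p.2])
      (by intro i _; fin_cases i <;> simp <;> linarith)
      (by simp [Fin.sum_univ_three]; linarith)
      (z := ![((0:ℝ),(0:ℝ)), (1,0), (0,1)])
      (by intro i _; fin_cases i <;> simp)
    convert this using 1
    simp [Finset.centerMass, Fin.sum_univ_three, Prod.ext_iff]
    rw [show (1 - p.1 - p.2 + p.1 + p.2 : ℝ) = 1 by ring]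
    norm_num
  · apply convexHull_min
    · intro p hp
      simp only [Set.mem_insert_iff, Set.mem_singleton_iff] at hp
      rcases hp with h | h | h <;> subst h <;> norm_num
    · rintro p hp q hq a b ha hb hab
      obtain ⟨h1,h2,h3⟩ := hp; obtain ⟨h4,h5,h6⟩ := hq
      refine ⟨?_, ?_, ?_⟩ <;> simp only [Prod.smul_fst, Prod.smul_snd, Prod.fst_add,
        Prod.snd_add, smul_eq_mul, Set.mem_setOf_eq] <;> nlinarith

lemma vol_T0 : volume {p : ℝ×ℝ | 0 ≤ p.1 ∧ 0 ≤ p.2 ∧ p.1 + p.2 ≤ 1} = ENNReal.ofReal (1/2) := by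
  set T : Set (ℝ×ℝ) := {p : ℝ×ℝ | 0 ≤ p.1 ∧ 0 ≤ p.2 ∧ p.1 + p.2 ≤ 1} with hT
  set O : Set (ℝ×ℝ) := regionBetween (fun _ : ℝ => (0:ℝ)) (fun x => 1 - x) (Set.Ioo 0 1) with hOdef
  have hint : IntegrableOn (fun x : ℝ => 1 - x) (Set.Ioo 0 1) volume :=
    ((continuous_const.sub continuous_id).integrableOn_Icc (a := 0) (b := 1)).mono_set
      Set.Ioo_subset_Icc_self
  have hO : volume O = ENNReal.ofReal (1/2) := by
    rw [Measure.volume_eq_prod, hOdef,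
      volume_regionBetween_eq_integral
        (integrableOn_const (by simp [Real.volume_Ioo]))
        hint measurableSet_Ioo (by intro x hx; simp at hx ⊢; linarith [hx.2])]
    congr 1
    simp only [Pi.sub_apply, sub_zero]
    rw [← MeasureTheory.integral_Ioc_eq_integral_Ioo,
      ← intervalIntegral.integral_of_le (by norm_num : (0:ℝ) ≤ 1)]
    open intervalIntegral in
    rw [integral_sub intervalIntegrable_const intervalIntegrable_id, integral_id]
    simp
    norm_num
  have hsub1 : O ⊆ T := by
    intro p hp
    simp only [hOdef, regionBetween, Set.mem_setOf_eq, Set.mem_Ioo] at hp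
    obtain ⟨⟨h1, h2⟩, h3, h4⟩ := hp
    exact ⟨le_of_lt h1, le_of_lt h3, by linarith⟩
  set N : Set (ℝ×ℝ) := {p : ℝ×ℝ | p.1 = 0} ∪ ({p : ℝ×ℝ | p.2 = 0} ∪ {p : ℝ×ℝ | p.1 + p.2 = 1})
    with hN
  have hsub2 : T ⊆ O ∪ N := by
    intro p hp
    obtain ⟨h1, h2, h3⟩ := hp
    rcases eq_or_lt_of_le h1 with h | h
    · exact Or.inr (Or.inl h.symm)
    rcases eq_or_lt_of_le h2 with h' | h'
    · exact Or.inr (Or.inr (Or.inl h'.symm))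
    rcases eq_or_lt_of_le h3 with h'' | h''
    · exact Or.inr (Or.inr (Or.inr h''))
    · left
      simp only [hOdef, regionBetween, Set.mem_setOf_eq, Set.mem_Ioo]
      exact ⟨⟨h, by linarith⟩, h', by linarith⟩
  have hNnull : volume N = 0 := by
    rw [hN]
    refine measure_union_null ?_ (measure_union_null ?_ line_null)
    · have : {p : ℝ×ℝ | p.1 = 0} = ({(0:ℝ)} : Set ℝ) ×ˢ (Set.univ : Set ℝ) := by
        ext p
        simp only [Set.mem_setOf_eq, Set.mem_prod, Set.mem_singleton_iff, Set.mem_univ,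
          and_true]
      rw [this, Measure.volume_eq_prod, Measure.prod_prod]; simp
    · have : {p : ℝ×ℝ | p.2 = 0} = (Set.univ : Set ℝ) ×ˢ ({(0:ℝ)} : Set ℝ) := by
        ext p
        simp only [Set.mem_setOf_eq, Set.mem_prod, Set.mem_singleton_iff, Set.mem_univ,
          true_and]
      rw [this, Measure.volume_eq_prod, Measure.prod_prod]; simp
  refine le_antisymm ?_ (by rw [← hO]; exact measure_mono hsub1)
  calc volume T ≤ volume (O ∪ N) := measure_mono hsub2
    _ ≤ volume O + volume N := measure_union_le _ _
    _ = ENNReal.ofReal (1/2) := by rw [hO, hNnull, add_zero]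

lemma vol_triangle (p q r : ℝ×ℝ) :
    volume (convexHull ℝ {p, q, r}) =
      ENNReal.ofReal (|(q.1-p.1)*(r.2-p.2) - (r.1-p.1)*(q.2-p.2)| / 2) := by
  set L := lin2 (q.1-p.1) (r.1-p.1) (q.2-p.2) (r.2-p.2) with hL
  have himg : convexHull ℝ {p, q, r}
      = p +ᵥ (L '' (convexHull ℝ {((0:ℝ),(0:ℝ)), (1,0), (0,1)})) := by
    have h1 : L '' (convexHull ℝ {((0:ℝ),(0:ℝ)), (1,0), (0,1)})
        = convexHull ℝ (L '' {((0:ℝ),(0:ℝ)), (1,0), (0,1)}) :=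
      L.toAffineMap.image_convexHull _
    have h2 : L '' {((0:ℝ),(0:ℝ)), (1,0), (0,1)} = {(0,0), q - p, r - p} := by
      rw [Set.image_insert_eq, Set.image_insert_eq, Set.image_singleton]
      rw [lin2_apply, lin2_apply, lin2_apply]
      rw [show q - p = (q.1-p.1, q.2-p.2) from rfl, show r - p = (r.1-p.1, r.2-p.2) from rfl]
      norm_num [Prod.ext_iff]
    have h3 : p +ᵥ convexHull ℝ ({((0:ℝ),(0:ℝ)), q - p, r - p} : Set (ℝ×ℝ))
        = convexHull ℝ (p +ᵥ ({((0:ℝ),(0:ℝ)), q - p, r - p} : Set (ℝ×ℝ))) := by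
      have h := (AffineEquiv.constVAdd ℝ (ℝ×ℝ) p).toAffineMap.image_convexHull
        ({((0:ℝ),(0:ℝ)), q - p, r - p} : Set (ℝ×ℝ))
      have hc : ⇑((AffineEquiv.constVAdd ℝ (ℝ×ℝ) p).toAffineMap) = fun x => p +ᵥ x := rfl
      rw [hc] at h
      rw [← Set.image_vadd, ← Set.image_vadd]
      exact h
    rw [h1, h2, h3]
    congr 1
    rw [Set.vadd_set_insert, Set.vadd_set_insert, Set.vadd_set_singleton]
    norm_num [Prod.ext_iff, Prod.mk_zero_zero]
  rw [himg, measure_vadd, Measure.addHaar_image_linearMap, hL, lin2_det, ← T0_eq, vol_T0,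
    ← ENNReal.ofReal_mul (abs_nonneg _)]
  rw [mul_one_div]

/-- Key step of the macroelement condition (M1): with `T₁ = conv(r₁, r₂, r₄)`,
`T₂ = conv(r₂, r₃, r₄)` positively oriented triangles sharing the edge `r₂ r₄`
and `βᵢ` the edge bubble of that edge on `Tᵢ`, if both vertex-quadrature
divergence sums vanish, then `w(r₂) = w(r₄)`. -/
theorem vertex_quadrature_kernel_forces_equal_values
    (r₁ r₂ r₃ r₄ : ℝ × ℝ)
    (hor₁ : 0 < (r₂.1 - r₁.1) * (r₄.2 - r₁.2) - (r₄.1 - r₁.1) * (r₂.2 - r₁.2))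
    (hor₂ : 0 < (r₃.1 - r₂.1) * (r₄.2 - r₂.2) - (r₄.1 - r₂.1) * (r₃.2 - r₂.2))
    (lamA₁ lamB₁ lamA₂ lamB₂ : ℝ × ℝ → ℝ)
    (hlamA₁_aff : ∃ a b c : ℝ, ∀ p : ℝ × ℝ, lamA₁ p = a * p.1 + b * p.2 + c)
    (hlamB₁_aff : ∃ a b c : ℝ, ∀ p : ℝ × ℝ, lamB₁ p = a * p.1 + b * p.2 + c)
    (hlamA₂_aff : ∃ a b c : ℝ, ∀ p : ℝ × ℝ, lamA₂ p = a * p.1 + b * p.2 + c)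
    (hlamB₂_aff : ∃ a b c : ℝ, ∀ p : ℝ × ℝ, lamB₂ p = a * p.1 + b * p.2 + c)
    (hA₁ : lamA₁ r₂ = 1) (hA₁' : lamA₁ r₁ = 0) (hA₁'' : lamA₁ r₄ = 0)
    (hB₁ : lamB₁ r₄ = 1) (hB₁' : lamB₁ r₁ = 0) (hB₁'' : lamB₁ r₂ = 0)
    (hA₂ : lamA₂ r₂ = 1) (hA₂' : lamA₂ r₃ = 0) (hA₂'' : lamA₂ r₄ = 0)
    (hB₂ : lamB₂ r₄ = 1) (hB₂' : lamB₂ r₃ = 0) (hB₂'' : lamB₂ r₂ = 0)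
    (β₁ β₂ : ℝ × ℝ → ℝ)
    (hβ₁ : ∀ p : ℝ × ℝ, β₁ p = 4 * lamA₁ p * lamB₁ p)
    (hβ₂ : ∀ p : ℝ × ℝ, β₂ p = 4 * lamA₂ p * lamB₂ p)
    (w : ℝ × ℝ → ℝ)
    (hsum₁ : ((volume (convexHull ℝ {r₁, r₂, r₄})).toReal / 3) *
          (fderiv ℝ β₁ r₁ (1, 0) * w r₁ + fderiv ℝ β₁ r₂ (1, 0) * w r₂ +
            fderiv ℝ β₁ r₄ (1, 0) * w r₄) +
        ((volume (convexHull ℝ {r₂, r₃, r₄})).toReal / 3) *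
          (fderiv ℝ β₂ r₂ (1, 0) * w r₂ + fderiv ℝ β₂ r₃ (1, 0) * w r₃ +
            fderiv ℝ β₂ r₄ (1, 0) * w r₄) = 0)
    (hsum₂ : ((volume (convexHull ℝ {r₁, r₂, r₄})).toReal / 3) *
          (fderiv ℝ β₁ r₁ (0, 1) * w r₁ + fderiv ℝ β₁ r₂ (0, 1) * w r₂ +
            fderiv ℝ β₁ r₄ (0, 1) * w r₄) +
        ((volume (convexHull ℝ {r₂, r₃, r₄})).toReal / 3) *
          (fderiv ℝ β₂ r₂ (0, 1) * w r₂ + fderiv ℝ β₂ r₃ (0, 1) * w r₃ +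
            fderiv ℝ β₂ r₄ (0, 1) * w r₄) = 0) :
    w r₂ = w r₄ := by

  obtain ⟨aA1, bA1, cA1, hA1r⟩ := hlamA₁_aff
  obtain ⟨aB1, bB1, cB1, hB1r⟩ := hlamB₁_aff
  obtain ⟨aA2, bA2, cA2, hA2r⟩ := hlamA₂_aff
  obtain ⟨aB2, bB2, cB2, hB2r⟩ := hlamB₂_aff
  -- point values
  have vA1_2 : aA1 * r₂.1 + bA1 * r₂.2 + cA1 = 1 := by rw [← hA1r r₂]; exact hA₁
  have vA1_1 : aA1 * r₁.1 + bA1 * r₁.2 + cA1 = 0 := by rw [← hA1r r₁]; exact hA₁'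
  have vA1_4 : aA1 * r₄.1 + bA1 * r₄.2 + cA1 = 0 := by rw [← hA1r r₄]; exact hA₁''
  have vB1_4 : aB1 * r₄.1 + bB1 * r₄.2 + cB1 = 1 := by rw [← hB1r r₄]; exact hB₁
  have vB1_1 : aB1 * r₁.1 + bB1 * r₁.2 + cB1 = 0 := by rw [← hB1r r₁]; exact hB₁'
  have vB1_2 : aB1 * r₂.1 + bB1 * r₂.2 + cB1 = 0 := by rw [← hB1r r₂]; exact hB₁''
  have vA2_2 : aA2 * r₂.1 + bA2 * r₂.2 + cA2 = 1 := by rw [← hA2r r₂]; exact hA₂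
  have vA2_3 : aA2 * r₃.1 + bA2 * r₃.2 + cA2 = 0 := by rw [← hA2r r₃]; exact hA₂'
  have vA2_4 : aA2 * r₄.1 + bA2 * r₄.2 + cA2 = 0 := by rw [← hA2r r₄]; exact hA₂''
  have vB2_4 : aB2 * r₄.1 + bB2 * r₄.2 + cB2 = 1 := by rw [← hB2r r₄]; exact hB₂
  have vB2_3 : aB2 * r₃.1 + bB2 * r₃.2 + cB2 = 0 := by rw [← hB2r r₃]; exact hB₂'
  have vB2_2 : aB2 * r₂.1 + bB2 * r₂.2 + cB2 = 0 := by rw [← hB2r r₂]; exact hB₂''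
  have hb₁ : β₁ = fun qq : ℝ × ℝ => 4 * (aA1 * qq.1 + bA1 * qq.2 + cA1)
      * (aB1 * qq.1 + bB1 * qq.2 + cB1) :=
    funext fun qq => by rw [hβ₁ qq, hA1r qq, hB1r qq]
  have hb₂ : β₂ = fun qq : ℝ × ℝ => 4 * (aA2 * qq.1 + bA2 * qq.2 + cA2)
      * (aB2 * qq.1 + bB2 * qq.2 + cB2) :=
    funext fun qq => by rw [hβ₂ qq, hA2r qq, hB2r qq]
  -- derivatives at the vertices
  have d1_1x : fderiv ℝ β₁ r₁ ((1:ℝ), (0:ℝ)) = 0 := by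
    rw [hb₁, fderiv_quad, vA1_1, vB1_1]; ring
  have d1_2x : fderiv ℝ β₁ r₂ ((1:ℝ), (0:ℝ)) = 4 * aB1 := by
    rw [hb₁, fderiv_quad, vA1_2, vB1_2]; ring
  have d1_4x : fderiv ℝ β₁ r₄ ((1:ℝ), (0:ℝ)) = 4 * aA1 := by
    rw [hb₁, fderiv_quad, vA1_4, vB1_4]; ring
  have d1_1y : fderiv ℝ β₁ r₁ ((0:ℝ), (1:ℝ)) = 0 := by
    rw [hb₁, fderiv_quad, vA1_1, vB1_1]; ring
  have d1_2y : fderiv ℝ β₁ r₂ ((0:ℝ), (1:ℝ)) = 4 * bB1 := by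
    rw [hb₁, fderiv_quad, vA1_2, vB1_2]; ring
  have d1_4y : fderiv ℝ β₁ r₄ ((0:ℝ), (1:ℝ)) = 4 * bA1 := by
    rw [hb₁, fderiv_quad, vA1_4, vB1_4]; ring
  have d2_3x : fderiv ℝ β₂ r₃ ((1:ℝ), (0:ℝ)) = 0 := by
    rw [hb₂, fderiv_quad, vA2_3, vB2_3]; ring
  have d2_2x : fderiv ℝ β₂ r₂ ((1:ℝ), (0:ℝ)) = 4 * aB2 := by
    rw [hb₂, fderiv_quad, vA2_2, vB2_2]; ring
  have d2_4x : fderiv ℝ β₂ r₄ ((1:ℝ), (0:ℝ)) = 4 * aA2 := by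
    rw [hb₂, fderiv_quad, vA2_4, vB2_4]; ring
  have d2_3y : fderiv ℝ β₂ r₃ ((0:ℝ), (1:ℝ)) = 0 := by
    rw [hb₂, fderiv_quad, vA2_3, vB2_3]; ring
  have d2_2y : fderiv ℝ β₂ r₂ ((0:ℝ), (1:ℝ)) = 4 * bB2 := by
    rw [hb₂, fderiv_quad, vA2_2, vB2_2]; ring
  have d2_4y : fderiv ℝ β₂ r₄ ((0:ℝ), (1:ℝ)) = 4 * bA2 := by
    rw [hb₂, fderiv_quad, vA2_4, vB2_4]; ring
  -- volumes
  have hV₁ : (volume (convexHull ℝ {r₁, r₂, r₄})).toReal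
      = ((r₂.1 - r₁.1) * (r₄.2 - r₁.2) - (r₄.1 - r₁.1) * (r₂.2 - r₁.2)) / 2 := by
    rw [vol_triangle, abs_of_pos hor₁, ENNReal.toReal_ofReal (by linarith)]
  have hV₂ : (volume (convexHull ℝ {r₂, r₃, r₄})).toReal
      = ((r₃.1 - r₂.1) * (r₄.2 - r₂.2) - (r₄.1 - r₂.1) * (r₃.2 - r₂.2)) / 2 := by
    rw [vol_triangle, abs_of_pos hor₂, ENNReal.toReal_ofReal (by linarith)]
  rw [d1_1x, d1_2x, d1_4x, d2_2x, d2_3x, d2_4x, hV₁, hV₂] at hsum₁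
  rw [d1_1y, d1_2y, d1_4y, d2_2y, d2_3y, d2_4y, hV₁, hV₂] at hsum₂
  -- gradient identities
  have gaA1 : aA1 * ((r₂.1 - r₁.1) * (r₄.2 - r₁.2) - (r₄.1 - r₁.1) * (r₂.2 - r₁.2))
      = r₄.2 - r₁.2 := by
    linear_combination (r₄.2 - r₁.2) * vA1_2 - (r₄.2 - r₁.2) * vA1_1
      - (r₂.2 - r₁.2) * vA1_4 + (r₂.2 - r₁.2) * vA1_1
  have gbA1 : bA1 * ((r₂.1 - r₁.1) * (r₄.2 - r₁.2) - (r₄.1 - r₁.1) * (r₂.2 - r₁.2))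
      = r₁.1 - r₄.1 := by
    linear_combination (r₂.1 - r₁.1) * vA1_4 - (r₂.1 - r₁.1) * vA1_1
      - (r₄.1 - r₁.1) * vA1_2 + (r₄.1 - r₁.1) * vA1_1
  have gaB1 : aB1 * ((r₂.1 - r₁.1) * (r₄.2 - r₁.2) - (r₄.1 - r₁.1) * (r₂.2 - r₁.2))
      = r₁.2 - r₂.2 := by
    linear_combination (r₄.2 - r₁.2) * vB1_2 - (r₄.2 - r₁.2) * vB1_1
      - (r₂.2 - r₁.2) * vB1_4 + (r₂.2 - r₁.2) * vB1_1
  have gbB1 : bB1 * ((r₂.1 - r₁.1) * (r₄.2 - r₁.2) - (r₄.1 - r₁.1) * (r₂.2 - r₁.2))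
      = r₂.1 - r₁.1 := by
    linear_combination (r₂.1 - r₁.1) * vB1_4 - (r₂.1 - r₁.1) * vB1_1
      - (r₄.1 - r₁.1) * vB1_2 + (r₄.1 - r₁.1) * vB1_1
  have gaA2 : aA2 * ((r₃.1 - r₂.1) * (r₄.2 - r₂.2) - (r₄.1 - r₂.1) * (r₃.2 - r₂.2))
      = r₃.2 - r₄.2 := by
    linear_combination (-(r₄.2 - r₃.2)) * vA2_2 + (r₄.2 - r₃.2) * vA2_3
      + (r₂.2 - r₃.2) * vA2_4 - (r₂.2 - r₃.2) * vA2_3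
  have gbA2 : bA2 * ((r₃.1 - r₂.1) * (r₄.2 - r₂.2) - (r₄.1 - r₂.1) * (r₃.2 - r₂.2))
      = r₄.1 - r₃.1 := by
    linear_combination (-(r₂.1 - r₃.1)) * vA2_4 + (r₂.1 - r₃.1) * vA2_3
      + (r₄.1 - r₃.1) * vA2_2 - (r₄.1 - r₃.1) * vA2_3
  have gaB2 : aB2 * ((r₃.1 - r₂.1) * (r₄.2 - r₂.2) - (r₄.1 - r₂.1) * (r₃.2 - r₂.2))
      = r₂.2 - r₃.2 := by
    linear_combination (-(r₄.2 - r₃.2)) * vB2_2 + (r₄.2 - r₃.2) * vB2_3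
      + (r₂.2 - r₃.2) * vB2_4 - (r₂.2 - r₃.2) * vB2_3
  have gbB2 : bB2 * ((r₃.1 - r₂.1) * (r₄.2 - r₂.2) - (r₄.1 - r₂.1) * (r₃.2 - r₂.2))
      = r₃.1 - r₂.1 := by
    linear_combination (-(r₂.1 - r₃.1)) * vB2_4 + (r₂.1 - r₃.1) * vB2_3
      + (r₄.1 - r₃.1) * vB2_2 - (r₄.1 - r₃.1) * vB2_3
  have h1 : (r₃.2 - r₁.2) * (w r₂ - w r₄) = 0 := by
    linear_combination (-(3/2 : ℝ)) * hsum₁ + w r₂ * gaB1 + w r₄ * gaA1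
      + w r₂ * gaB2 + w r₄ * gaA2
  have h2 : (r₃.1 - r₁.1) * (w r₂ - w r₄) = 0 := by
    linear_combination (3/2 : ℝ) * hsum₂ - w r₂ * gbB1 - w r₄ * gbA1
      - w r₂ * gbB2 - w r₄ * gbA2
  rcases mul_eq_zero.1 h1 with hy | hw
  · rcases mul_eq_zero.1 h2 with hx | hw
    · exfalso
      rw [sub_eq_zero] at hx hy
      rw [hx, hy] at hor₂
      linarith [hor₁, hor₂]
    · linarith [sub_eq_zero.1 hw]
  · linarith [sub_eq_zero.1 hw]
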